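/- If v is a terminal node of the reduced game tree T (i.e., v ∈ T but no one-element extension of v lies in T), then v itself is a losing node for some player. -/
import Mathlib


/-- The initial segment `[f 0, ..., f (n-1)]` of an infinite sequence. -/
def initSeg (f : ℕ → ℕ) (n : ℕ) : List ℕ := (List.range n).map f

/-- The set of infinite sequences having some initial segment in `S`. -/
def U (S : Set (List ℕ)) : Set (ℕ → ℕ) := { f | ∃ n, initSeg f n ∈ S }

/-- A node `v` is losing for player one if it is player one's turn (even length) and some
initial segment of `v` lies in `S₂`; losing for player two if it is player two's turn
(odd length) and some initial segment of `v` lies in `S₁`. -/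
def LosingNode (S₁ S₂ : Set (List ℕ)) (v : List ℕ) : Prop :=
  (Even v.length ∧ ∃ k ≤ v.length, v.take k ∈ S₂) ∨
    (Odd v.length ∧ ∃ k ≤ v.length, v.take k ∈ S₁)

/-- The reduced game tree: all finite sequences with no proper initial segment that is a
losing node for either player. -/
def ReducedTree (S₁ S₂ : Set (List ℕ)) : Set (List ℕ) :=
  { v | ∀ u : List ℕ, u <+: v → u ≠ v → ¬ LosingNode S₁ S₂ u }

/-- A terminal node of the reduced game tree is itself a losing node for some player. -/
theorem terminal_node_losing (S₁ S₂ : Set (List ℕ)) (hdisj : U S₁ ∩ U S₂ = ∅)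
    (v : List ℕ) (hv : v ∈ ReducedTree S₁ S₂)
    (hterm : ∀ m : ℕ, v ++ [m] ∉ ReducedTree S₁ S₂) :
    LosingNode S₁ S₂ v := by
  have h := hterm 0
  simp only [ReducedTree, Set.mem_setOf_eq, not_forall] at h
  obtain ⟨u, hpre, hne, hlose⟩ := h
  rcases List.prefix_concat_iff.mp hpre with rfl | hpv
  · exact absurd rfl hne
  · rcases eq_or_ne u v with rfl | huv
    · exact not_not.mp hlose
    · exact absurd (not_not.mp hlose) (hv u hpv huv)
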